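/- Let j : ℝ^d × ℝ^d → ℝ^d and c₀, C₀ > 0, γ ∈ (0,1] satisfy c₀‖z‖ ≤ ‖j(x,z)‖ ≤ C₀‖z‖ for all x, z and ‖j(x,z) − j(y,z)‖ ≤ C₀‖z‖·‖x−y‖^γ for all x, y, z. Assume the maximum setup: u, v : ℝ^d → ℝ are bounded Borel measurable, φ : [0,∞) → ℝ is C² with φ' ≥ 0 and φ'' ≤ 0, and ψ(x,y) := u(x) − v(y) − φ(‖x−y‖) attains a global maximum at (x̄, ȳ) with x̄ ≠ ȳ; set a := x̄ − ȳ, â := a/‖a‖, p := φ'(‖a‖)·â and m := (x̄+ȳ)/2. Let δ₀ ∈ (0,1) and η ∈ (0,1/2) satisfy 1 − η − δ₀ > 0 and (‖a‖/2)^γ ≤ (c₀/C₀) · η/(4−η); set δ := ‖a‖δ₀, η̃ := (1−η−δ₀)/(1+δ₀), and 𝒞 := { z : ‖j(m,z)‖ ≤ δ/2 and |⟨j(m,z), â⟩| ≥ (1−η/2)‖j(m,z)‖ }. Let μ be a nonnegative Borel measure on ℝ^d for which all integrands appearing below are integrable on 𝒞. Then ∫_𝒞 (u(x̄+j(x̄,z))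 − u(x̄) − ⟨p, j(x̄,z)⟩) dμ(z) − ∫_𝒞 (v(ȳ+j(ȳ,z)) − v(ȳ) − ⟨p, j(ȳ,z)⟩) dμ(z) ≤ ∫_𝒞 sup_{s∈[−1,1], x∈{x̄,ȳ}} ( ( (1−η̃²)·φ'(‖a+s·j(x,z)‖)/‖a+s·j(x,z)‖ + η̃²·φ''(‖a+s·j(x,z)‖) ) ‖j(x,z)‖² ) dμ(z). -/

import Mathlib

open MeasureTheory RealInnerProductSpace Set

section Helpers


variable {E : Type*} [NormedAddCommGroup E] [InnerProductSpace ℝ E]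

lemma CE_norm_affine_pos (a w : E) (hw : ‖w‖ < ‖a‖) (s : ℝ) (hs : |s| ≤ 1) :
    0 < ‖a + s • w‖ := by
  have h1 : ‖s • w‖ ≤ ‖w‖ := by
    rw [norm_smul, Real.norm_eq_abs]
    nlinarith [norm_nonneg w]
  have h2 : ‖a‖ ≤ ‖a + s • w‖ + ‖s • w‖ := by
    simpa using norm_sub_le (a + s • w) (s • w)
  linarith

lemma CE_hasDerivAt_norm_affine (a w : E) (t : ℝ) (h : a + t • w ≠ 0) :
    HasDerivAt (fun s : ℝ => ‖a + s • w‖) (⟪a + t • w, w⟫ / ‖a + t • w‖) t := by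
  set ξ := a + t • w with hξ
  have hline : HasDerivAt (fun s : ℝ => a + s • w) w t := by
    simpa using ((hasDerivAt_id t).smul_const w).const_add a
  have hq : HasDerivAt (fun s : ℝ => ⟪a + s • w, a + s • w⟫) (2 * ⟪ξ, w⟫) t := by
    have := HasDerivAt.inner ℝ hline hline
    refine this.congr_deriv ?_
    show _ = 2 * ⟪a + t • w, w⟫
    rw [real_inner_comm (a + t • w) w]; ring
  have hqt : ⟪ξ, ξ⟫ ≠ 0 := by
    simpa [real_inner_self_eq_norm_sq, pow_eq_zero_iff] using (norm_ne_zero_iff.2 h)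
  have hsq : HasDerivAt (fun s : ℝ => Real.sqrt ⟪a + s • w, a + s • w⟫)
      (1 / (2 * Real.sqrt ⟪ξ, ξ⟫) * (2 * ⟪ξ, w⟫)) t :=
    (Real.hasDerivAt_sqrt hqt).comp t hq
  have heq : (fun s : ℝ => Real.sqrt ⟪a + s • w, a + s • w⟫) = fun s : ℝ => ‖a + s • w‖ := by
    funext s
    rw [real_inner_self_eq_norm_sq, Real.sqrt_sq (norm_nonneg _)]
  rw [heq] at hsq
  convert hsq using 1
  rw [real_inner_self_eq_norm_sq, Real.sqrt_sq (norm_nonneg _)]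
  have : ‖ξ‖ ≠ 0 := norm_ne_zero_iff.2 h
  field_simp

lemma CE_taylor_bound (F F' F'' : ℝ → ℝ) (K : ℝ)
    (h1 : ∀ t ∈ Icc (0:ℝ) 1, HasDerivAt F (F' t) t)
    (h2 : ∀ t ∈ Icc (0:ℝ) 1, HasDerivAt F' (F'' t) t)
    (hK : ∀ t ∈ Icc (0:ℝ) 1, F'' t ≤ K) :
    F 1 - F 0 - F' 0 ≤ K / 2 := by
  have hconv : Convex ℝ (Icc (0:ℝ) 1) := convex_Icc 0 1
  have hint : interior (Icc (0:ℝ) 1) = Ioo 0 1 := interior_Icc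
  have hd1 : ∀ t ∈ Icc (0:ℝ) 1, HasDerivAt (fun t => F' t - F' 0 - K * t) (F'' t - K) t := by
    intro t ht
    exact (((h2 t ht).sub_const (F' 0)).sub ((hasDerivAt_id t).const_mul K)).congr_deriv (by ring)
  have hanti1 : AntitoneOn (fun t => F' t - F' 0 - K * t) (Icc (0:ℝ) 1) := by
    apply antitoneOn_of_deriv_nonpos hconv
    · intro t ht; exact (hd1 t ht).continuousAt.continuousWithinAt
    · intro t ht
      rw [hint] at ht
      exact (hd1 t (Ioo_subset_Icc_self ht)).differentiableAt.differentiableWithinAt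
    · intro t ht
      rw [hint] at ht
      rw [(hd1 t (Ioo_subset_Icc_self ht)).deriv]
      linarith [hK t (Ioo_subset_Icc_self ht)]
  have hstep1 : ∀ t ∈ Icc (0:ℝ) 1, F' t ≤ F' 0 + K * t := by
    intro t ht
    have := hanti1 (left_mem_Icc.2 one_pos.le) ht ht.1
    simp at this; linarith
  have hd2 : ∀ t ∈ Icc (0:ℝ) 1,
      HasDerivAt (fun t => F t - F' 0 * t - K * t ^ 2 / 2) (F' t - F' 0 - K * t) t := by
    intro t ht
    have h := ((h1 t ht).sub ((hasDerivAt_id t).const_mul (F' 0))).sub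
      (((hasDerivAt_pow 2 t).const_mul K).div_const 2)
    exact h.congr_deriv (by push_cast; ring)
  have hanti2 : AntitoneOn (fun t => F t - F' 0 * t - K * t ^ 2 / 2) (Icc (0:ℝ) 1) := by
    apply antitoneOn_of_deriv_nonpos hconv
    · intro t ht; exact (hd2 t ht).continuousAt.continuousWithinAt
    · intro t ht
      rw [hint] at ht
      exact (hd2 t (Ioo_subset_Icc_self ht)).differentiableAt.differentiableWithinAt
    · intro t ht
      rw [hint] at ht
      rw [(hd2 t (Ioo_subset_Icc_self ht)).deriv]
      linarith [hstep1 t (Ioo_subset_Icc_self ht)]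
  have := hanti2 (left_mem_Icc.2 one_pos.le) (right_mem_Icc.2 one_pos.le) one_pos.le
  simp at this; linarith

lemma CE_side_bound (a w : E) (φ : ℝ → ℝ) (hφ : ContDiff ℝ 2 φ)
    (hφ' : ∀ t : ℝ, 0 ≤ t → 0 ≤ deriv φ t)
    (hφ'' : ∀ t : ℝ, 0 ≤ t → deriv (deriv φ) t ≤ 0)
    (ηt : ℝ) (hηt : 0 ≤ ηt) (hwA : ‖w‖ < ‖a‖)
    (hdir : ∀ s : ℝ, |s| ≤ 1 → ηt * ‖w‖ * ‖a + s • w‖ ≤ |⟪a + s • w, w⟫|)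
    (K : ℝ)
    (hK : ∀ s : ℝ, s ∈ Icc (0:ℝ) 1 →
      ((1 - ηt ^ 2) * deriv φ ‖a + s • w‖ / ‖a + s • w‖
        + ηt ^ 2 * deriv (deriv φ) ‖a + s • w‖) * ‖w‖ ^ 2 ≤ K) :
    φ ‖a + w‖ - φ ‖a‖ - deriv φ ‖a‖ * (⟪a, w⟫ / ‖a‖) ≤ K / 2 := by
  have hφ1 : ContDiff ℝ 1 (deriv φ) := by
    have h2 : ContDiff ℝ ((1 : ℕ) + 1 : ℕ) φ := by exact_mod_cast hφ
    exact (contDiff_succ_iff_deriv.mp h2).2.2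
  have hdφ : ∀ x : ℝ, HasDerivAt φ (deriv φ x) x := fun x =>
    ((hφ.differentiable (by norm_num)) x).hasDerivAt
  have hdφ' : ∀ x : ℝ, HasDerivAt (deriv φ) (deriv (deriv φ) x) x := fun x =>
    ((hφ1.differentiable (by norm_num)) x).hasDerivAt
  set N : ℝ → ℝ := fun s => ‖a + s • w‖ with hNdef
  set I : ℝ → ℝ := fun s => ⟪a + s • w, w⟫ with hIdef
  have habs : ∀ t : ℝ, t ∈ Icc (0:ℝ) 1 → |t| ≤ 1 := fun t ht =>
    abs_le.2 ⟨by linarith [ht.1], ht.2⟩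
  have hr : ∀ t : ℝ, t ∈ Icc (0:ℝ) 1 → 0 < N t := fun t ht =>
    CE_norm_affine_pos a w hwA t (habs t ht)
  have hne : ∀ t : ℝ, t ∈ Icc (0:ℝ) 1 → a + t • w ≠ 0 := by
    intro t ht h0
    have := hr t ht
    simp only [hNdef] at this
    rw [h0] at this; simp at this
  set F : ℝ → ℝ := fun t => φ (N t) with hFdef
  set F' : ℝ → ℝ := fun t => deriv φ (N t) * (I t / N t) with hF'def
  set F'' : ℝ → ℝ := fun t =>
    deriv (deriv φ) (N t) * (I t / N t) ^ 2
      + deriv φ (N t) * (‖w‖ ^ 2 - (I t / N t) ^ 2) / N t with hF''def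
  have hNd : ∀ t ∈ Icc (0:ℝ) 1, HasDerivAt N (I t / N t) t := fun t ht =>
    CE_hasDerivAt_norm_affine a w t (hne t ht)
  have hId : ∀ t : ℝ, HasDerivAt I (‖w‖ ^ 2) t := by
    intro t
    have hline : HasDerivAt (fun s : ℝ => a + s • w) w t := by
      simpa using ((hasDerivAt_id t).smul_const w).const_add a
    have := HasDerivAt.inner ℝ hline (hasDerivAt_const t w)
    simpa [real_inner_self_eq_norm_sq] using this
  have h1 : ∀ t ∈ Icc (0:ℝ) 1, HasDerivAt F (F' t) t := fun t ht =>
    (hdφ (N t)).comp t (hNd t ht)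
  have h2 : ∀ t ∈ Icc (0:ℝ) 1, HasDerivAt F' (F'' t) t := by
    intro t ht
    have hrt := hr t ht
    have hquot : HasDerivAt (fun s => I s / N s)
        ((‖w‖ ^ 2 * N t - I t * (I t / N t)) / N t ^ 2) t :=
      (hId t).div (hNd t ht) (ne_of_gt hrt)
    have hcomp : HasDerivAt (fun s => deriv φ (N s)) (deriv (deriv φ) (N t) * (I t / N t)) t :=
      (hdφ' (N t)).comp t (hNd t ht)
    have hmul := hcomp.mul hquot
    have hne0 : N t ≠ 0 := ne_of_gt hrt
    have hval : deriv (deriv φ) (N t) * (I t / N t) * (I t / N t)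
        + deriv φ (N t) * ((‖w‖ ^ 2 * N t - I t * (I t / N t)) / N t ^ 2) = F'' t := by
      rw [hF''def]
      field_simp [hne0]
    exact hval ▸ hmul
  have hK' : ∀ t ∈ Icc (0:ℝ) 1, F'' t ≤ K := by
    intro t ht
    have hrt := hr t ht
    refine le_trans ?_ (hK t ht)
    set r := N t with hrdef
    set uu := I t / N t with huu
    have hCS : |I t| ≤ r * ‖w‖ := by
      simpa [hrdef, hNdef, hIdef] using abs_real_inner_le_norm (a + t • w) w
    have huabs : |uu| ≤ ‖w‖ := by
      rw [huu, abs_div, abs_of_pos hrt]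
      rw [div_le_iff₀ hrt]
      rw [hrdef] at hCS ⊢
      linarith [hCS]
    have hu2 : uu ^ 2 ≤ ‖w‖ ^ 2 := by
      nlinarith [abs_nonneg uu, sq_abs uu]
    have hlowu : ηt ^ 2 * ‖w‖ ^ 2 ≤ uu ^ 2 := by
      have hd := hdir t (habs t ht)
      have : ηt * ‖w‖ ≤ |uu| := by
        rw [huu, abs_div, abs_of_pos hrt, le_div_iff₀ hrt]
        simpa [hNdef, hIdef, mul_comm, mul_assoc, mul_left_comm] using hd
      have h2 := pow_le_pow_left₀ (mul_nonneg hηt (norm_nonneg w)) this 2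
      rw [mul_pow, sq_abs] at h2
      exact h2
    have hP : 0 ≤ deriv φ r / r := div_nonneg (hφ' r hrt.le) hrt.le
    have hpp : deriv (deriv φ) r ≤ 0 := hφ'' r hrt.le
    have hprod : (uu ^ 2 - ηt ^ 2 * ‖w‖ ^ 2) * (deriv (deriv φ) r - deriv φ r / r) ≤ 0 :=
      mul_nonpos_of_nonneg_of_nonpos (by linarith) (by linarith)
    have hexp : F'' t = deriv (deriv φ) r * uu ^ 2 + (deriv φ r / r) * (‖w‖ ^ 2 - uu ^ 2) := by
      rw [hF''def]
      simp only [← hrdef, ← huu]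
      ring
    rw [hexp]
    have hrhs : ((1 - ηt ^ 2) * deriv φ r / r + ηt ^ 2 * deriv (deriv φ) r) * ‖w‖ ^ 2
        = ((1 - ηt ^ 2) * (deriv φ r / r) + ηt ^ 2 * deriv (deriv φ) r) * ‖w‖ ^ 2 := by ring
    rw [show ‖a + t • w‖ = r by rw [hrdef, hNdef], hrhs]
    nlinarith [hprod]
  have hmain := CE_taylor_bound F F' F'' K h1 h2 hK'
  have e1 : F 1 = φ ‖a + w‖ := by simp [hFdef, hNdef]
  have e0 : F 0 = φ ‖a‖ := by simp [hFdef, hNdef]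
  have e0' : F' 0 = deriv φ ‖a‖ * (⟪a, w⟫ / ‖a‖) := by simp [hF'def, hNdef, hIdef]
  rw [e1, e0, e0'] at hmain
  exact hmain

lemma CE_dir_bound (a a_hat w : E) (hA : 0 < ‖a‖) (ha_hat : a_hat = ‖a‖⁻¹ • a)
    (η δ₀ ηt : ℝ) (hηδ₀ : 0 ≤ 1 - η - δ₀) (hηt : ηt = (1 - η - δ₀) / (1 + δ₀))
    (hδ₀ : 0 < δ₀) (hη0 : 0 ≤ η)
    (hnw : ‖w‖ ≤ δ₀ * ‖a‖) (hdw : (1 - η) * ‖w‖ ≤ |⟪w, a_hat⟫|) :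
    ∀ s : ℝ, |s| ≤ 1 → ηt * ‖w‖ * ‖a + s • w‖ ≤ |⟪a + s • w, w⟫| := by
  intro s hs
  have hupper : ‖a + s • w‖ ≤ (1 + δ₀) * ‖a‖ := by
    have h1 : ‖s • w‖ ≤ ‖w‖ := by
      rw [norm_smul, Real.norm_eq_abs]
      nlinarith [norm_nonneg w]
    calc ‖a + s • w‖ ≤ ‖a‖ + ‖s • w‖ := norm_add_le _ _
      _ ≤ (1 + δ₀) * ‖a‖ := by linarith
  have hinner : ⟪a + s • w, w⟫ = ⟪a, w⟫ + s * ‖w‖ ^ 2 := by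
    rw [inner_add_left, real_inner_smul_left, real_inner_self_eq_norm_sq]
  have haw : ⟪a, w⟫ = ‖a‖ * ⟪a_hat, w⟫ := by
    rw [ha_hat, real_inner_smul_left]
    field_simp
  have habs1 : (1 - η) * ‖a‖ * ‖w‖ ≤ |⟪a, w⟫| := by
    rw [haw, abs_mul, abs_norm]
    rw [real_inner_comm] at hdw
    nlinarith [hA]
  have habs2 : |s * ‖w‖ ^ 2| ≤ δ₀ * ‖a‖ * ‖w‖ := by
    rw [abs_mul, abs_of_nonneg (sq_nonneg ‖w‖)]
    nlinarith [norm_nonneg w, abs_nonneg s]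
  have hlb : (1 - η - δ₀) * ‖a‖ * ‖w‖ ≤ |⟪a + s • w, w⟫| := by
    rw [hinner]
    have h := abs_sub_abs_le_abs_sub (⟪a, w⟫) (-(s * ‖w‖ ^ 2))
    rw [abs_neg, sub_neg_eq_add] at h
    linarith
  have hηtnn : 0 ≤ ηt := by
    rw [hηt]; exact div_nonneg hηδ₀ (by linarith)
  have heq : ηt * (1 + δ₀) = 1 - η - δ₀ := by
    rw [hηt]; field_simp
  calc ηt * ‖w‖ * ‖a + s • w‖ ≤ ηt * ‖w‖ * ((1 + δ₀) * ‖a‖) := by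
        exact mul_le_mul_of_nonneg_left hupper (mul_nonneg hηtnn (norm_nonneg w))
    _ = (1 - η - δ₀) * ‖a‖ * ‖w‖ := by rw [← heq]; ring
    _ ≤ |⟪a + s • w, w⟫| := hlb

lemma CE_integral_mono_on {α : Type*} [MeasurableSpace α] (μ : Measure α) (s : Set α)
    (f g : α → ℝ) (hf : IntegrableOn f s μ) (hg : IntegrableOn g s μ)
    (hle : ∀ z ∈ s, f z ≤ g z) :
    ∫ z in s, f z ∂μ ≤ ∫ z in s, g z ∂μ := by
  obtain ⟨f', hf'm, hf'eq⟩ := hf.1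
  obtain ⟨g', hg'm, hg'eq⟩ := hg.1
  have hS : MeasurableSet {z | g' z < f' z} :=
    measurableSet_lt hg'm.measurable hf'm.measurable
  have hN : μ.restrict s ({z | f z ≠ f' z} ∪ {z | g z ≠ g' z}) = 0 := by
    apply measure_union_null
    · exact hf'eq
    · exact hg'eq
  have hsub : {z | g' z < f' z} ∩ s ⊆ {z | f z ≠ f' z} ∪ {z | g z ≠ g' z} := by
    rintro z ⟨hzlt, hzs⟩
    simp only [mem_setOf_eq] at hzlt
    by_contra hc
    simp only [mem_union, mem_setOf_eq, not_or, not_not] at hc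
    have := hle z hzs
    rw [hc.1, hc.2] at this
    exact absurd this (not_le.2 hzlt)
  have h0 : μ.restrict s {z | g' z < f' z} = 0 := by
    rw [Measure.restrict_apply hS]
    have h1 : μ ({z | g' z < f' z} ∩ s) ≤ μ.restrict s ({z | g' z < f' z} ∩ s) := by
      have := Measure.le_restrict_apply (μ := μ) s ({z | g' z < f' z} ∩ s)
      simpa [inter_assoc] using this
    have h2 : μ.restrict s ({z | g' z < f' z} ∩ s) = 0 :=
      measure_mono_null hsub hN
    exact le_antisymm (h2 ▸ h1) (zero_le)
  have hae : f ≤ᵐ[μ.restrict s] g := by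
    have h2 : ∀ᵐ z ∂μ.restrict s, ¬ (g' z < f' z) := by
      rw [ae_iff]
      simpa using h0
    filter_upwards [hf'eq, hg'eq, h2] with z e1 e2 hlt
    rw [e1, e2]
    exact not_lt.1 hlt
  exact integral_mono_ae hf hg hae


lemma CE_coef (η q : ℝ) (hη0 : 0 < η) (hq0 : 0 ≤ q) (hqe : q * (4 - η) = η) :
    (1 - η) * (1 + q) ≤ (1 - η/2) - q := by
  nlinarith [mul_nonneg hq0 hη0.le]
end Helpers

set_option maxHeartbeats 1000000

/-- **Concave estimate on the cone for Lévy–Itô operators (Lemma est_LI2).**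
In the maximum setup, with a jump function `j` satisfying the nondegeneracy and Hölder
conditions, the difference of the Lévy–Itô nonlocal terms over the middle cone `𝒞` is
bounded by `∫_𝒞 sup_{|s|≤1, x∈{x̄,ȳ}} ((1−η̃²)φ'(‖a+sj(x,z)‖)/‖a+sj(x,z)‖ +
η̃²φ''(‖a+sj(x,z)‖))‖j(x,z)‖² dμ`. -/
theorem cone_estimate_levy_ito {d : ℕ}
    (j : EuclideanSpace ℝ (Fin d) → EuclideanSpace ℝ (Fin d) → EuclideanSpace ℝ (Fin d))
    (c₀ C₀ γ : ℝ) (hc₀ : 0 < c₀) (hC₀ : 0 < C₀) (hγ : γ ∈ Ioc (0:ℝ) 1)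
    (hlow : ∀ x z, c₀ * ‖z‖ ≤ ‖j x z‖)
    (hup : ∀ x z, ‖j x z‖ ≤ C₀ * ‖z‖)
    (hlip : ∀ x y z, ‖j x z - j y z‖ ≤ C₀ * ‖z‖ * ‖x - y‖ ^ γ)
    (u v : EuclideanSpace ℝ (Fin d) → ℝ)
    (hum : Measurable u) (hvm : Measurable v)
    (hub : ∃ C, ∀ x, |u x| ≤ C) (hvb : ∃ C, ∀ x, |v x| ≤ C)
    (φ : ℝ → ℝ) (hφ : ContDiff ℝ 2 φ)
    (hφ' : ∀ t : ℝ, 0 ≤ t → 0 ≤ deriv φ t)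
    (hφ'' : ∀ t : ℝ, 0 ≤ t → deriv (deriv φ) t ≤ 0)
    (xb yb : EuclideanSpace ℝ (Fin d)) (hxy : xb ≠ yb)
    (hmax : ∀ x y, u x - v y - φ ‖x - y‖ ≤ u xb - v yb - φ ‖xb - yb‖)
    (a : EuclideanSpace ℝ (Fin d)) (ha : a = xb - yb)
    (a_hat : EuclideanSpace ℝ (Fin d)) (ha_hat : a_hat = ‖a‖⁻¹ • a)
    (p : EuclideanSpace ℝ (Fin d)) (hp : p = deriv φ ‖a‖ • a_hat)
    (m : EuclideanSpace ℝ (Fin d)) (hm : m = (2:ℝ)⁻¹ • (xb + yb))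
    (δ₀ η : ℝ) (hδ₀ : δ₀ ∈ Ioo (0:ℝ) 1) (hη : η ∈ Ioo (0:ℝ) (1/2))
    (hηδ₀ : 0 < 1 - η - δ₀)
    (hsmall : (‖a‖ / 2) ^ γ ≤ (c₀ / C₀) * (η / (4 - η)))
    (δ eta_t : ℝ) (hδ : δ = ‖a‖ * δ₀) (heta_t : eta_t = (1 - η - δ₀) / (1 + δ₀))
    (Cone : Set (EuclideanSpace ℝ (Fin d)))
    (hCone : Cone = {z | ‖j m z‖ ≤ δ / 2 ∧ (1 - η / 2) * ‖j m z‖ ≤ abs ⟪j m z, a_hat⟫})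
    (μ : Measure (EuclideanSpace ℝ (Fin d)))
    (g : EuclideanSpace ℝ (Fin d) → ℝ)
    (hg : ∀ z, g z = ⨆ s : Icc (-1:ℝ) 1,
        max (((1 - eta_t ^ 2) * deriv φ ‖a + (s : ℝ) • j xb z‖ / ‖a + (s : ℝ) • j xb z‖
                + eta_t ^ 2 * deriv (deriv φ) ‖a + (s : ℝ) • j xb z‖) * ‖j xb z‖ ^ 2)
            (((1 - eta_t ^ 2) * deriv φ ‖a + (s : ℝ) • j yb z‖ / ‖a + (s : ℝ) • j yb z‖
                + eta_t ^ 2 * deriv (deriv φ) ‖a + (s : ℝ) • j yb z‖) * ‖j yb z‖ ^ 2))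
    (hint1 : IntegrableOn (fun z => u (xb + j xb z) - u xb - ⟪p, j xb z⟫) Cone μ)
    (hint2 : IntegrableOn (fun z => v (yb + j yb z) - v yb - ⟪p, j yb z⟫) Cone μ)
    (hint3 : IntegrableOn g Cone μ) :
    (∫ z in Cone, (u (xb + j xb z) - u xb - ⟪p, j xb z⟫) ∂μ)
      - ∫ z in Cone, (v (yb + j yb z) - v yb - ⟪p, j yb z⟫) ∂μ
    ≤ ∫ z in Cone, g z ∂μ := by
  obtain ⟨hδ₀0, hδ₀1⟩ := hδ₀
  obtain ⟨hη0, hη12⟩ := hη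
  have hA : 0 < ‖a‖ := by
    rw [ha]; exact norm_pos_iff.2 (sub_ne_zero.2 hxy)
  have hη4 : (0:ℝ) < 4 - η := by linarith
  have hηt0 : 0 ≤ eta_t := by
    rw [heta_t]; exact div_nonneg (by linarith) (by linarith)
  have hδa : δ₀ * ‖a‖ < ‖a‖ := by nlinarith
  have hahat_norm : ‖a_hat‖ = 1 := by
    rw [ha_hat, norm_smul, Real.norm_eq_abs, abs_inv, abs_norm]
    field_simp
  have hpw : ∀ w : EuclideanSpace ℝ (Fin d), ⟪p, w⟫ = deriv φ ‖a‖ * (⟪a, w⟫ / ‖a‖) := by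
    intro w
    rw [hp, ha_hat, real_inner_smul_left, real_inner_smul_left]
    field_simp
  have hφ1 : ContDiff ℝ 1 (deriv φ) := by
    have h2 : ContDiff ℝ ((1 : ℕ) + 1 : ℕ) φ := by exact_mod_cast hφ
    exact (contDiff_succ_iff_deriv.mp h2).2.2
  have hc1 : Continuous (deriv φ) := hφ.continuous_deriv one_le_two
  have hc2 : Continuous (deriv (deriv φ)) := hφ1.continuous_deriv le_rfl
  have hxm : ‖xb - m‖ = ‖a‖ / 2 := by
    have h : xb - m = (2:ℝ)⁻¹ • a := by rw [hm, ha]; module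
    rw [h, norm_smul, Real.norm_eq_abs, abs_of_pos (by norm_num : (0:ℝ) < 2⁻¹)]
    ring
  have hym : ‖yb - m‖ = ‖a‖ / 2 := by
    have h : yb - m = -((2:ℝ)⁻¹ • a) := by rw [hm, ha]; module
    rw [h, norm_neg, norm_smul, Real.norm_eq_abs, abs_of_pos (by norm_num : (0:ℝ) < 2⁻¹)]
    ring
  have hpt : ∀ z ∈ Cone,
      (u (xb + j xb z) - u xb - ⟪p, j xb z⟫) - (v (yb + j yb z) - v yb - ⟪p, j yb z⟫) ≤ g z := by
    intro z hz
    rw [hCone, mem_setOf_eq] at hz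
    obtain ⟨hz1, hz2⟩ := hz
    have hδnn : (0:ℝ) ≤ δ := by rw [hδ]; positivity
    -- transfer of the cone conditions from m to xb and yb
    have key : ∀ x : EuclideanSpace ℝ (Fin d), ‖x - m‖ = ‖a‖ / 2 →
        ‖j x z‖ ≤ δ₀ * ‖a‖ ∧ (1 - η) * ‖j x z‖ ≤ |⟪j x z, a_hat⟫| := by
      intro x hx
      set q : ℝ := η / (4 - η) with hqdef
      have hq0 : 0 ≤ q := div_nonneg hη0.le hη4.le
      have hq1 : q ≤ 1 := by rw [hqdef, div_le_one hη4]; linarith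
      have hqe : q * (4 - η) = η := by rw [hqdef]; field_simp
      have hM0 : (0:ℝ) ≤ ‖j m z‖ := norm_nonneg _
      have hclose : ‖j x z - j m z‖ ≤ q * ‖j m z‖ := by
        have h1 := hlip x m z
        rw [hx] at h1
        have h2 : C₀ * ‖z‖ * ((‖a‖/2) ^ γ) ≤ C₀ * ‖z‖ * ((c₀/C₀) * (η/(4-η))) :=
          mul_le_mul_of_nonneg_left hsmall (mul_nonneg hC₀.le (norm_nonneg z))
        have h3 : C₀ * ‖z‖ * ((c₀/C₀) * (η/(4-η))) = (c₀ * ‖z‖) * q := by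
          rw [hqdef]; field_simp
        have h4 : (c₀ * ‖z‖) * q ≤ ‖j m z‖ * q :=
          mul_le_mul_of_nonneg_right (hlow m z) hq0
        calc ‖j x z - j m z‖ ≤ C₀ * ‖z‖ * (‖a‖/2) ^ γ := h1
          _ ≤ ‖j m z‖ * q := by rw [h3] at h2; linarith
          _ = q * ‖j m z‖ := mul_comm _ _
      have hnle : ‖j x z‖ ≤ (1 + q) * ‖j m z‖ := by
        have hd : j x z = j m z + (j x z - j m z) := by abel
        calc ‖j x z‖ = ‖j m z + (j x z - j m z)‖ := by rw [← hd]
          _ ≤ ‖j m z‖ + ‖j x z - j m z‖ := norm_add_le _ _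
          _ ≤ (1 + q) * ‖j m z‖ := by linarith
      constructor
      · calc ‖j x z‖ ≤ (1 + q) * ‖j m z‖ := hnle
          _ ≤ (1 + q) * (δ/2) := mul_le_mul_of_nonneg_left hz1 (by linarith)
          _ ≤ 2 * (δ/2) := mul_le_mul_of_nonneg_right (by linarith) (by linarith)
          _ = δ := by ring
          _ = δ₀ * ‖a‖ := by rw [hδ]; ring
      · have hsm : |⟪j x z - j m z, a_hat⟫| ≤ q * ‖j m z‖ := by
          calc |⟪j x z - j m z, a_hat⟫| ≤ ‖j x z - j m z‖ * ‖a_hat‖ :=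
                abs_real_inner_le_norm _ _
            _ = ‖j x z - j m z‖ := by rw [hahat_norm, mul_one]
            _ ≤ q * ‖j m z‖ := hclose
        have hieq : ⟪j x z, a_hat⟫ = ⟪j m z, a_hat⟫ + ⟪j x z - j m z, a_hat⟫ := by
          rw [inner_sub_left]; ring
        have hlb : (1 - η/2) * ‖j m z‖ - q * ‖j m z‖ ≤ |⟪j x z, a_hat⟫| := by
          have h := abs_sub_abs_le_abs_sub (⟪j m z, a_hat⟫) (-(⟪j x z - j m z, a_hat⟫))
          rw [abs_neg, sub_neg_eq_add, ← hieq] at h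
          linarith
        have hcoef : (1 - η) * (1 + q) ≤ (1 - η/2) - q := CE_coef η q hη0 hq0 hqe
        calc (1 - η) * ‖j x z‖ ≤ (1 - η) * ((1 + q) * ‖j m z‖) :=
              mul_le_mul_of_nonneg_left hnle (by linarith)
          _ = ((1 - η) * (1 + q)) * ‖j m z‖ := by ring
          _ ≤ ((1 - η/2) - q) * ‖j m z‖ := mul_le_mul_of_nonneg_right hcoef hM0
          _ ≤ |⟪j x z, a_hat⟫| := by linarith
    obtain ⟨hnx1, hnx2⟩ := key xb hxm
    obtain ⟨hny1, hny2⟩ := key yb hym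
    have hwa1 : ‖j xb z‖ < ‖a‖ := lt_of_le_of_lt hnx1 hδa
    have hwa2 : ‖j yb z‖ < ‖a‖ := lt_of_le_of_lt hny1 hδa
    -- boundedness of the sup family
    have hcont : ∀ w : EuclideanSpace ℝ (Fin d), ‖w‖ < ‖a‖ →
        Continuous (fun s : Icc (-1:ℝ) 1 =>
          ((1 - eta_t ^ 2) * deriv φ ‖a + (s:ℝ) • w‖ / ‖a + (s:ℝ) • w‖
            + eta_t ^ 2 * deriv (deriv φ) ‖a + (s:ℝ) • w‖) * ‖w‖ ^ 2) := by
      intro w hw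
      have hN : Continuous (fun s : Icc (-1:ℝ) 1 => ‖a + (s:ℝ) • w‖) :=
        (continuous_const.add (continuous_subtype_val.smul continuous_const)).norm
      have hpos : ∀ s : Icc (-1:ℝ) 1, ‖a + (s:ℝ) • w‖ ≠ 0 := fun s =>
        ne_of_gt (CE_norm_affine_pos a w hw s (abs_le.2 ⟨s.2.1, s.2.2⟩))
      exact (((continuous_const.mul (hc1.comp hN)).div hN hpos).add
        (continuous_const.mul (hc2.comp hN))).mul continuous_const
    have hbdd : BddAbove (range fun s : Icc (-1:ℝ) 1 =>
        max (((1 - eta_t ^ 2) * deriv φ ‖a + (s : ℝ) • j xb z‖ / ‖a + (s : ℝ) • j xb z‖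
                + eta_t ^ 2 * deriv (deriv φ) ‖a + (s : ℝ) • j xb z‖) * ‖j xb z‖ ^ 2)
            (((1 - eta_t ^ 2) * deriv φ ‖a + (s : ℝ) • j yb z‖ / ‖a + (s : ℝ) • j yb z‖
                + eta_t ^ 2 * deriv (deriv φ) ‖a + (s : ℝ) • j yb z‖) * ‖j yb z‖ ^ 2)) :=
      (isCompact_range ((hcont _ hwa1).max (hcont _ hwa2))).bddAbove
    have hsup1 : ∀ σ : ℝ, σ ∈ Icc (0:ℝ) 1 →
        ((1 - eta_t ^ 2) * deriv φ ‖a + σ • j xb z‖ / ‖a + σ • j xb z‖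
          + eta_t ^ 2 * deriv (deriv φ) ‖a + σ • j xb z‖) * ‖j xb z‖ ^ 2 ≤ g z := by
      intro σ hσ
      rw [hg]
      have hmem : σ ∈ Icc (-1:ℝ) 1 := ⟨by linarith [hσ.1], hσ.2⟩
      exact le_trans (le_max_left _ _) (le_ciSup hbdd ⟨σ, hmem⟩)
    have hsup2 : ∀ σ : ℝ, σ ∈ Icc (0:ℝ) 1 →
        ((1 - eta_t ^ 2) * deriv φ ‖a + σ • -(j yb z)‖ / ‖a + σ • -(j yb z)‖
          + eta_t ^ 2 * deriv (deriv φ) ‖a + σ • -(j yb z)‖) * ‖-(j yb z)‖ ^ 2 ≤ g z := by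
      intro σ hσ
      have hrw : a + σ • -(j yb z) = a + (-σ) • j yb z := by
        rw [smul_neg, neg_smul]
      rw [hrw, norm_neg, hg]
      have hmem : -σ ∈ Icc (-1:ℝ) 1 := ⟨by linarith [hσ.2], by linarith [hσ.1]⟩
      exact le_trans (le_max_right _ _) (le_ciSup hbdd ⟨-σ, hmem⟩)
    -- the two one-sided Taylor estimates
    have hside1 : φ ‖a + j xb z‖ - φ ‖a‖ - deriv φ ‖a‖ * (⟪a, j xb z⟫ / ‖a‖) ≤ g z / 2 :=
      CE_side_bound a (j xb z) φ hφ hφ' hφ'' eta_t hηt0 hwa1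
        (CE_dir_bound a a_hat (j xb z) hA ha_hat η δ₀ eta_t hηδ₀.le heta_t hδ₀0 hη0.le
          hnx1 hnx2) (g z) hsup1
    have hside2 : φ ‖a + -(j yb z)‖ - φ ‖a‖ - deriv φ ‖a‖ * (⟪a, -(j yb z)⟫ / ‖a‖) ≤ g z / 2 := by
      refine CE_side_bound a (-(j yb z)) φ hφ hφ' hφ'' eta_t hηt0 ?_
        (CE_dir_bound a a_hat (-(j yb z)) hA ha_hat η δ₀ eta_t hηδ₀.le heta_t hδ₀0 hη0.le
          ?_ ?_) (g z) hsup2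
      · rw [norm_neg]; exact hwa2
      · rw [norm_neg]; exact hny1
      · rw [norm_neg, inner_neg_left, abs_neg]; exact hny2
    -- maximality of the doubled variables functional
    have hmax1 : u (xb + j xb z) - u xb ≤ φ ‖a + j xb z‖ - φ ‖a‖ := by
      have h := hmax (xb + j xb z) yb
      have he : xb + j xb z - yb = a + j xb z := by rw [ha]; abel
      rw [he, ← ha] at h
      linarith
    have hmax2 : v yb - v (yb + j yb z) ≤ φ ‖a + -(j yb z)‖ - φ ‖a‖ := by
      have h := hmax xb (yb + j yb z)
      have he : xb - (yb + j yb z) = a + -(j yb z) := by rw [ha]; abel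
      rw [he, ← ha] at h
      linarith
    have hp1 : ⟪p, j xb z⟫ = deriv φ ‖a‖ * (⟪a, j xb z⟫ / ‖a‖) := hpw _
    have hp2 : -⟪p, j yb z⟫ = deriv φ ‖a‖ * (⟪a, -(j yb z)⟫ / ‖a‖) := by
      rw [← inner_neg_right, hpw]
    linarith [hside1, hside2, hmax1, hmax2]
  rw [← integral_sub hint1 hint2]
  exact CE_integral_mono_on μ Cone _ g (hint1.sub hint2) hint3 hpt
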